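/- arXiv:1608.07992 — 5 statements merged into one kernel-verified Lean document; each statement's English description precedes it below -/
import Mathlib

section
/- Let 𝔽 be a field, ι a nonempty finite index type, (V i)_{i ∈ ι} a family of vector spaces over 𝔽, and W i ⊆ V i a subspace for each i. For each i₀ ∈ ι, let T_{i₀} denote the image in the tensor product ⨂_{i ∈ ι} V i of the canonical map from ⨂_{i ∈ ι} U i, where U_{i₀} = W_{i₀} and U i = V i for i ≠ i₀. Then the intersection ⋂_{i₀ ∈ ι} T_{i₀} equals the image of the canonical map ⨂_{i ∈ ι} W i → ⨂_{i ∈ ι} V i. -/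
/-- Lemma 2.2(ii): for a finite family of subspaces `W i ⊆ V i`, the intersection over
`i₀` of the images in `⨂ i, V i` of the tensor products in which the `i₀`-th factor is
replaced by `W i₀` (and the others kept equal to `V i`, realised as the top submodule)
equals the image of `⨂ i, W i`. -/
theorem intersection_of_piTensor_images (𝔽 : Type*) [Field 𝔽]
    (ι : Type*) [Fintype ι] [Nonempty ι] [DecidableEq ι]
    (V : ι → Type*) [∀ i, AddCommGroup (V i)] [∀ i, Module 𝔽 (V i)]
    (W : ∀ i, Submodule 𝔽 (V i)) :
    (⨅ i₀ : ι, LinearMap.range (PiTensorProduct.map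
        (fun i => ((if i = i₀ then W i else ⊤ : Submodule 𝔽 (V i)).subtype)))) =
      LinearMap.range (PiTensorProduct.map (fun i => (W i).subtype)) := by
  -- choose projections p i : V i →ₗ V i onto W i
  choose q hq using fun i => Submodule.exists_isCompl (W i)
  set π : ∀ i, V i →ₗ[𝔽] W i := fun i => (W i).projectionOnto (q i) (hq i)
  set p : ∀ i, V i →ₗ[𝔽] V i := fun i => (W i).subtype ∘ₗ π i
  have hp : ∀ i, p i ∘ₗ (W i).subtype = (W i).subtype := by
    intro i
    ext w
    simp [p, π]
  apply le_antisymm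
  · intro x hx
    simp only [Submodule.mem_iInf, LinearMap.mem_range] at hx
    -- fixed by each single-coordinate projection
    have key : ∀ a : ι, PiTensorProduct.map
        (fun i => if h : i = a then p i else LinearMap.id) x = x := by
      intro a
      obtain ⟨y, hy⟩ := hx a
      rw [← hy, ← LinearMap.comp_apply, ← PiTensorProduct.map_comp]
      have he : (fun i => (if h : i = a then p i else LinearMap.id) ∘ₗ
          (if i = a then W i else ⊤ : Submodule 𝔽 (V i)).subtype)
          = fun i => (if i = a then W i else ⊤ : Submodule 𝔽 (V i)).subtype := by
        funext i
        by_cases h : i = a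
        · subst h
          rw [dif_pos rfl, if_pos rfl]
          exact hp i
        · simp [h]
      rw [he]
    have step : ∀ s : Finset ι, PiTensorProduct.map
        (fun i => if i ∈ s then p i else LinearMap.id) x = x := by
      intro s
      induction s using Finset.induction_on with
      | empty => simp [PiTensorProduct.map_id]
      | @insert a s ha ih =>
        have : (fun i => if i ∈ insert a s then p i else LinearMap.id)
            = fun i => (if h : i = a then p i else LinearMap.id) ∘ₗ
              (if i ∈ s then p i else LinearMap.id) := by
          funext i
          by_cases h : i = a
          · subst h
            by_cases hs : i ∈ s <;>
              simp [hs, Function.comp, LinearMap.comp_assoc]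
            · ext v; simp [p, π]; exact absurd hs ha
          · by_cases hs : i ∈ s <;> simp [h, hs]
        rw [this, PiTensorProduct.map_comp, LinearMap.comp_apply, ih, key a]
    have := step Finset.univ
    simp only [Finset.mem_univ, if_true] at this
    rw [← this]
    have : (p : ∀ i, V i →ₗ[𝔽] V i) = fun i => (W i).subtype ∘ₗ π i := rfl
    rw [this, PiTensorProduct.map_comp]
    exact ⟨PiTensorProduct.map π x, rfl⟩
  · rw [le_iInf_iff]
    intro a
    intro x hx
    obtain ⟨y, hy⟩ := hx
    have hle : ∀ i, W i ≤ (if i = a then W i else ⊤ : Submodule 𝔽 (V i)) := by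
      intro i; by_cases h : i = a <;> simp [h]
    have : (fun i => (W i).subtype) = fun i =>
        ((if i = a then W i else ⊤ : Submodule 𝔽 (V i)).subtype) ∘ₗ
          Submodule.inclusion (hle i) := by
      funext i; ext w; rfl
    rw [this, PiTensorProduct.map_comp] at hy
    exact ⟨_, hy⟩
end

section
/- Fix integers p ≥ 3 and f ≥ 2, and let 𝓘, S(λ), and compatibility be as defined. For every λ ∈ 𝓘 and every subset S' ⊆ S(λ), there exists exactly one λ' ∈ 𝓘 such that S(λ') = S' and λ' is compatible with λ. -/
/-- The six allowed affine functions `x ↦ x`, `x ↦ x+1`, `x ↦ x−1`, `x ↦ p−2−x`,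
`x ↦ p−1−x`, `x ↦ p−3−x`. -/
def sixSet (p : ℤ) : Set (ℤ → ℤ) :=
  {fun x => x, fun x => x + 1, fun x => x - 1,
   fun x => p - 2 - x, fun x => p - 1 - x, fun x => p - 3 - x}

/-- The functions of the form `x ↦ x`, `x ↦ x+1`, `x ↦ x−1`. -/
def idLikeSet : Set (ℤ → ℤ) :=
  {fun x => x, fun x => x + 1, fun x => x - 1}

/-- The functions of the form `x ↦ p−2−x`, `x ↦ p−1−x`, `x ↦ p−3−x`. -/
def flipLikeSet (p : ℤ) : Set (ℤ → ℤ) :=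
  {fun x => p - 2 - x, fun x => p - 1 - x, fun x => p - 3 - x}

/-- The functions `x ↦ x`, `x ↦ p−2−x` (no shift). -/
def noShiftSet (p : ℤ) : Set (ℤ → ℤ) :=
  {fun x => x, fun x => p - 2 - x}

/-- The functions `x ↦ x+1`, `x ↦ x−1`, `x ↦ p−1−x`, `x ↦ p−3−x` (nonzero shift). -/
def shiftSet (p : ℤ) : Set (ℤ → ℤ) :=
  {fun x => x + 1, fun x => x - 1, fun x => p - 1 - x, fun x => p - 3 - x}

/-- The functions with shift `+1`: `x ↦ x+1`, `x ↦ p−1−x`. -/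
def plusSet (p : ℤ) : Set (ℤ → ℤ) :=
  {fun x => x + 1, fun x => p - 1 - x}

/-- Membership in the set `𝓘`: each `λ i` is one of the six allowed affine functions,
and the adjacency conditions (indices mod `f`) hold. -/
def MemI (p : ℤ) (f : ℕ) (lam : ZMod f → ℤ → ℤ) : Prop :=
  ∀ i : ZMod f,
    lam i ∈ sixSet p ∧
    (lam i ∈ idLikeSet → lam (i + 1) ∈ noShiftSet p) ∧
    (lam i ∈ flipLikeSet p → lam (i + 1) ∈ shiftSet p)

/-- `S(λ)`: the set of indices where `λ i` carries a nonzero shift `±1`. -/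
def ShiftIdx (p : ℤ) (f : ℕ) (lam : ZMod f → ℤ → ℤ) : Set (ZMod f) :=
  {i | lam i ∈ shiftSet p}

/-- `λ` and `λ'` are compatible: on every common index of `S(λ)` and `S(λ')`,
the signs of the shifts agree. -/
def Compatible (p : ℤ) (f : ℕ) (lam lam' : ZMod f → ℤ → ℤ) : Prop :=
  ∀ i ∈ ShiftIdx p f lam ∩ ShiftIdx p f lam',
    (lam i ∈ plusSet p ↔ lam' i ∈ plusSet p)

/- ### Auxiliary disequality lemmas -/

lemma fne_aux {g h : ℤ → ℤ} (H : ¬(g 0 = h 0 ∧ g 1 = h 1)) : g ≠ h :=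
  fun e => H ⟨by rw [e], by rw [e]⟩

lemma nid_shift (p : ℤ) : (fun x : ℤ => x) ∉ shiftSet p := by
  simp only [shiftSet, Set.mem_insert_iff, Set.mem_singleton_iff]
  push_neg
  exact ⟨fne_aux (by omega), fne_aux (by omega), fne_aux (by omega), fne_aux (by omega)⟩

lemma nf2_shift (p : ℤ) : (fun x : ℤ => p - 2 - x) ∉ shiftSet p := by
  simp only [shiftSet, Set.mem_insert_iff, Set.mem_singleton_iff]
  push_neg
  exact ⟨fne_aux (by omega), fne_aux (by omega), fne_aux (by omega), fne_aux (by omega)⟩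

lemma nf1_id (p : ℤ) : (fun x : ℤ => p - 1 - x) ∉ idLikeSet := by
  simp only [idLikeSet, Set.mem_insert_iff, Set.mem_singleton_iff]
  push_neg
  exact ⟨fne_aux (by omega), fne_aux (by omega), fne_aux (by omega)⟩

lemma nf2_id (p : ℤ) : (fun x : ℤ => p - 2 - x) ∉ idLikeSet := by
  simp only [idLikeSet, Set.mem_insert_iff, Set.mem_singleton_iff]
  push_neg
  exact ⟨fne_aux (by omega), fne_aux (by omega), fne_aux (by omega)⟩

lemma nf3_id (p : ℤ) : (fun x : ℤ => p - 3 - x) ∉ idLikeSet := by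
  simp only [idLikeSet, Set.mem_insert_iff, Set.mem_singleton_iff]
  push_neg
  exact ⟨fne_aux (by omega), fne_aux (by omega), fne_aux (by omega)⟩

lemma nid_flip (p : ℤ) : (fun x : ℤ => x) ∉ flipLikeSet p := by
  simp only [flipLikeSet, Set.mem_insert_iff, Set.mem_singleton_iff]
  push_neg
  exact ⟨fne_aux (by omega), fne_aux (by omega), fne_aux (by omega)⟩

lemma np1_flip (p : ℤ) : (fun x : ℤ => x + 1) ∉ flipLikeSet p := by
  simp only [flipLikeSet, Set.mem_insert_iff, Set.mem_singleton_iff]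
  push_neg
  exact ⟨fne_aux (by omega), fne_aux (by omega), fne_aux (by omega)⟩

lemma nm1_flip (p : ℤ) : (fun x : ℤ => x - 1) ∉ flipLikeSet p := by
  simp only [flipLikeSet, Set.mem_insert_iff, Set.mem_singleton_iff]
  push_neg
  exact ⟨fne_aux (by omega), fne_aux (by omega), fne_aux (by omega)⟩

lemma nm1_plus (p : ℤ) : (fun x : ℤ => x - 1) ∉ plusSet p := by
  simp only [plusSet, Set.mem_insert_iff, Set.mem_singleton_iff]
  push_neg
  exact ⟨fne_aux (by omega), fne_aux (by omega)⟩

lemma nf3_plus (p : ℤ) : (fun x : ℤ => p - 3 - x) ∉ plusSet p := by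
  simp only [plusSet, Set.mem_insert_iff, Set.mem_singleton_iff]
  push_neg
  exact ⟨fne_aux (by omega), fne_aux (by omega)⟩


lemma mp1_shift (p : ℤ) : (fun x : ℤ => x + 1) ∈ shiftSet p := by simp [shiftSet]
lemma mm1_shift (p : ℤ) : (fun x : ℤ => x - 1) ∈ shiftSet p := by simp [shiftSet]
lemma mf1_shift (p : ℤ) : (fun x : ℤ => p - 1 - x) ∈ shiftSet p := by simp [shiftSet]
lemma mf3_shift (p : ℤ) : (fun x : ℤ => p - 3 - x) ∈ shiftSet p := by simp [shiftSet]
lemma mf1_flip (p : ℤ) : (fun x : ℤ => p - 1 - x) ∈ flipLikeSet p := by simp [flipLikeSet]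
lemma mf2_flip (p : ℤ) : (fun x : ℤ => p - 2 - x) ∈ flipLikeSet p := by simp [flipLikeSet]
lemma mf3_flip (p : ℤ) : (fun x : ℤ => p - 3 - x) ∈ flipLikeSet p := by simp [flipLikeSet]
lemma mp1_plus (p : ℤ) : (fun x : ℤ => x + 1) ∈ plusSet p := by simp [plusSet]
lemma mf1_plus (p : ℤ) : (fun x : ℤ => p - 1 - x) ∈ plusSet p := by simp [plusSet]

/- ### The construction -/


open Classical in
noncomputable def buildLam (p : ℤ) (f : ℕ) (lam : ZMod f → ℤ → ℤ) (S' : Set (ZMod f)) :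
    ZMod f → ℤ → ℤ := fun i =>
  if i ∈ S' then
    if lam i ∈ plusSet p then
      if (i + 1 : ZMod f) ∈ S' then (fun x => p - 1 - x) else (fun x => x + 1)
    else
      if (i + 1 : ZMod f) ∈ S' then (fun x => p - 3 - x) else (fun x => x - 1)
  else
    if (i + 1 : ZMod f) ∈ S' then (fun x => p - 2 - x) else (fun x => x)

section Build
variable (p : ℤ) (f : ℕ) (lam : ZMod f → ℤ → ℤ) (S' : Set (ZMod f))

lemma buildLam_mem_six (i : ZMod f) : buildLam p f lam S' i ∈ sixSet p := by
  by_cases hi : i ∈ S' <;> by_cases hj : (i + 1 : ZMod f) ∈ S' <;>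
    by_cases hk : lam i ∈ plusSet p <;> simp [buildLam, hi, hj, hk, sixSet]

lemma buildLam_shift_iff (i : ZMod f) :
    buildLam p f lam S' i ∈ shiftSet p ↔ i ∈ S' := by
  by_cases hi : i ∈ S' <;> by_cases hj : (i + 1 : ZMod f) ∈ S' <;>
      by_cases hk : lam i ∈ plusSet p <;>
    simp only [buildLam, hi, hj, hk, if_true, if_false, iff_true, iff_false] <;>
    first
      | (simp [shiftSet]; done)
      | exact nid_shift p | exact nf2_shift p

lemma buildLam_flip_iff (i : ZMod f) :
    buildLam p f lam S' i ∈ flipLikeSet p ↔ (i + 1 : ZMod f) ∈ S' := by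
  by_cases hi : i ∈ S' <;> by_cases hj : (i + 1 : ZMod f) ∈ S' <;>
      by_cases hk : lam i ∈ plusSet p <;>
    simp only [buildLam, hi, hj, hk, if_true, if_false, iff_true, iff_false] <;>
    first
      | (simp [flipLikeSet]; done)
      | exact nid_flip p | exact np1_flip p | exact nm1_flip p

lemma buildLam_noshift (i : ZMod f) (hi : i ∉ S') :
    buildLam p f lam S' i ∈ noShiftSet p := by
  by_cases hj : (i + 1 : ZMod f) ∈ S' <;> simp [buildLam, hi, hj, noShiftSet]

lemma buildLam_plus_iff (i : ZMod f) (hi : i ∈ S') :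
    buildLam p f lam S' i ∈ plusSet p ↔ lam i ∈ plusSet p := by
  by_cases hj : (i + 1 : ZMod f) ∈ S' <;> by_cases hk : lam i ∈ plusSet p <;>
    simp only [buildLam, hi, hj, hk, if_true, if_false, iff_true, iff_false] <;>
    first
      | (simp [plusSet]; done)
      | exact nm1_plus p | exact nf3_plus p

end Build

/- ### Helper facts about members of the six sets -/

lemma six_split {p : ℤ} {g : ℤ → ℤ} (h : g ∈ sixSet p) :
    g ∈ idLikeSet ∨ g ∈ flipLikeSet p := by
  simp only [sixSet, Set.mem_insert_iff, Set.mem_singleton_iff] at h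
  rcases h with h | h | h | h | h | h <;> subst h <;>
    simp [idLikeSet, flipLikeSet]

lemma noshift_not_shift {p : ℤ} {g : ℤ → ℤ} (h : g ∈ noShiftSet p) : g ∉ shiftSet p := by
  simp only [noShiftSet, Set.mem_insert_iff, Set.mem_singleton_iff] at h
  rcases h with h | h <;> subst h
  · exact nid_shift p
  · exact nf2_shift p


/-- Lemma 2.12: for every `λ ∈ 𝓘` and every subset `S' ⊆ S(λ)`, there is exactly one
`λ' ∈ 𝓘` with `S(λ') = S'` which is compatible with `λ`. -/
theorem exists_unique_compatible (p : ℤ) (hp : 3 ≤ p) (f : ℕ) (hf : 2 ≤ f)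
    (lam : ZMod f → ℤ → ℤ) (hlam : MemI p f lam)
    (S' : Set (ZMod f)) (hS' : S' ⊆ ShiftIdx p f lam) :
    ∃! lam' : ZMod f → ℤ → ℤ,
      MemI p f lam' ∧ ShiftIdx p f lam' = S' ∧ Compatible p f lam lam' := by
  classical
  refine ⟨buildLam p f lam S', ⟨?_, ?_, ?_⟩, ?_⟩
  · -- MemI
    intro i
    refine ⟨buildLam_mem_six p f lam S' i, ?_, ?_⟩
    · intro hid
      have hj : (i + 1 : ZMod f) ∉ S' := by
        intro hj
        rcases six_split (buildLam_mem_six p f lam S' i) with h | h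
        · -- fine, but we need contradiction from flip_iff
          exact absurd ((buildLam_flip_iff p f lam S' i).2 hj)
            (by
              rcases (show buildLam p f lam S' i ∈ idLikeSet from hid) with h' | h' | h' <;>
                rw [show buildLam p f lam S' i = _ from h']
              · exact nid_flip p
              · exact np1_flip p
              · exact nm1_flip p)
        · exact absurd ((buildLam_flip_iff p f lam S' i).2 hj)
            (by
              rcases hid with h' | h' | h' <;> rw [show buildLam p f lam S' i = _ from h']
              · exact nid_flip p
              · exact np1_flip p
              · exact nm1_flip p)
      exact buildLam_noshift p f lam S' (i + 1) hj
    · intro hfl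
      have hj : (i + 1 : ZMod f) ∈ S' := (buildLam_flip_iff p f lam S' i).1 hfl
      exact (buildLam_shift_iff p f lam S' (i + 1)).2 hj
  · -- ShiftIdx = S'
    ext i
    exact buildLam_shift_iff p f lam S' i
  · -- Compatible
    intro i hi
    have hi2 : i ∈ S' := (buildLam_shift_iff p f lam S' i).1 hi.2
    exact (buildLam_plus_iff p f lam S' i hi2).symm
  · -- uniqueness
    rintro mu ⟨hmu, hsh, hcomp⟩
    funext i
    have hshi : ∀ j : ZMod f, mu j ∈ shiftSet p ↔ j ∈ S' := by
      intro j; rw [← hsh]; rfl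
    have hflipi : mu i ∈ flipLikeSet p ↔ (i + 1 : ZMod f) ∈ S' := by
      constructor
      · intro h
        exact (hshi (i + 1)).1 ((hmu i).2.2 h)
      · intro hj
        rcases six_split (hmu i).1 with h | h
        · exact absurd ((hshi (i + 1)).2 hj) (noshift_not_shift ((hmu i).2.1 h))
        · exact h
    have hsix := (hmu i).1
    simp only [sixSet, Set.mem_insert_iff, Set.mem_singleton_iff] at hsix
    by_cases hi : i ∈ S' <;> by_cases hj : (i + 1 : ZMod f) ∈ S'
    · -- shift and flip
      have hmus : mu i ∈ shiftSet p := (hshi i).2 hi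
      have hmuf : mu i ∈ flipLikeSet p := hflipi.2 hj
      have hsign : lam i ∈ plusSet p ↔ mu i ∈ plusSet p :=
        hcomp i ⟨hS' hi, (hshi i).2 hi⟩
      by_cases hk : lam i ∈ plusSet p <;>
          simp only [buildLam, hi, hj, hk, if_true, if_false] <;>
          rcases hsix with h | h | h | h | h | h <;> rw [h] <;> rw [h] at hmus hmuf hsign <;>
        first
          | rfl
          | exact absurd hmus (nid_shift p)
          | exact absurd hmus (nf2_shift p)
          | exact absurd hmuf (np1_flip p)
          | exact absurd hmuf (nm1_flip p)
          | exact absurd (hsign.1 hk) (nm1_plus p)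
          | exact absurd (hsign.1 hk) (nf3_plus p)
          | exact absurd (hsign.2 (mp1_plus p)) hk
          | exact absurd (hsign.2 (mf1_plus p)) hk
    · -- shift, no flip
      have hmus : mu i ∈ shiftSet p := (hshi i).2 hi
      have hmuf : mu i ∉ flipLikeSet p := fun h => hj (hflipi.1 h)
      have hsign : lam i ∈ plusSet p ↔ mu i ∈ plusSet p :=
        hcomp i ⟨hS' hi, (hshi i).2 hi⟩
      by_cases hk : lam i ∈ plusSet p <;>
          simp only [buildLam, hi, hj, hk, if_true, if_false] <;>
          rcases hsix with h | h | h | h | h | h <;> rw [h] <;> rw [h] at hmus hmuf hsign <;>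
        first
          | rfl
          | exact absurd hmus (nid_shift p)
          | exact absurd hmus (nf2_shift p)
          | exact absurd (mf1_flip p) hmuf
          | exact absurd (mf3_flip p) hmuf
          | exact absurd (hsign.1 hk) (nm1_plus p)
          | exact absurd (hsign.1 hk) (nf3_plus p)
          | exact absurd (hsign.2 (mp1_plus p)) hk
          | exact absurd (hsign.2 (mf1_plus p)) hk
    · -- no shift, flip
      have hmus : mu i ∉ shiftSet p := fun h => hi ((hshi i).1 h)
      have hmuf : mu i ∈ flipLikeSet p := hflipi.2 hj
      simp only [buildLam, hi, hj, if_true, if_false] <;>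
          rcases hsix with h | h | h | h | h | h <;> rw [h] <;> rw [h] at hmus hmuf <;>
        first
          | rfl
          | exact absurd (mp1_shift p) hmus
          | exact absurd (mm1_shift p) hmus
          | exact absurd (mf1_shift p) hmus
          | exact absurd (mf3_shift p) hmus
          | exact absurd hmuf (nid_flip p)
    · -- no shift, no flip
      have hmus : mu i ∉ shiftSet p := fun h => hi ((hshi i).1 h)
      have hmuf : mu i ∉ flipLikeSet p := fun h => hj (hflipi.1 h)
      simp only [buildLam, hi, hj, if_true, if_false] <;>
          rcases hsix with h | h | h | h | h | h <;> rw [h] <;> rw [h] at hmus hmuf <;>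
        first
          | rfl
          | exact absurd (mp1_shift p) hmus
          | exact absurd (mm1_shift p) hmus
          | exact absurd (mf1_shift p) hmus
          | exact absurd (mf3_shift p) hmus
          | exact absurd (mf2_flip p) hmuf
end

section
/- Let R be a ring and let A, B, C be R-modules. Suppose given two short exact sequences of R-modules 0 → B →^{ι} X →^{π} A → 0 and 0 → B →^{ι'} X' →^{π'} A → 0. Let X'' := {(x, x') ∈ X × X' : π x = π' x'} (the pullback), and let Y := X'' / {(−ι b, ι' b) : b ∈ B} (the quotient of X'' by the skew diagonal copy of B; Y represents the Baer sum of the two extensions). Assume: (i) Hom_R(X, C) = 0, and (ii) the restriction map Hom_R(X', C) → Hom_R(B, C), φ ↦ φ ∘ ι', is bijective. Then Hom_R(Y, C) = 0. -/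
/-- Lemma 2.15 (Baer sum): given short exact sequences `0 → B → X → A → 0` and
`0 → B → X' → A → 0`, let `X''` be the pullback `{(x, x') : π x = π' x'}` and `Y` its
quotient by the skew diagonal `{(−ι b, ι' b) : b ∈ B}` (representing the Baer sum).
If `Hom(X, C) = 0` and restriction along `ι'` gives a bijection
`Hom(X', C) ≃ Hom(B, C)`, then `Hom(Y, C) = 0`. -/
theorem baer_sum_hom_vanishing (R A B C X X' : Type*) [Ring R]
    [AddCommGroup A] [Module R A] [AddCommGroup B] [Module R B]
    [AddCommGroup C] [Module R C] [AddCommGroup X] [Module R X]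
    [AddCommGroup X'] [Module R X']
    (ι : B →ₗ[R] X) (π : X →ₗ[R] A)
    (ι' : B →ₗ[R] X') (π' : X' →ₗ[R] A)
    (hι : Function.Injective ι) (hπ : Function.Surjective π)
    (hexact : LinearMap.range ι = LinearMap.ker π)
    (hι' : Function.Injective ι') (hπ' : Function.Surjective π')
    (hexact' : LinearMap.range ι' = LinearMap.ker π')
    (hX : ∀ φ : X →ₗ[R] C, φ = 0)
    (hX' : Function.Bijective fun φ : X' →ₗ[R] C => φ.comp ι') :
    ∀ ψ : (↥(LinearMap.ker
          (π.comp (LinearMap.fst R X X') - π'.comp (LinearMap.snd R X X'))) ⧸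
        Submodule.comap
          (LinearMap.ker
            (π.comp (LinearMap.fst R X X') - π'.comp (LinearMap.snd R X X'))).subtype
          (LinearMap.range ((-ι).prod ι'))) →ₗ[R] C, ψ = 0 := by
  set δ : X × X' →ₗ[R] A :=
    π.comp (LinearMap.fst R X X') - π'.comp (LinearMap.snd R X X') with hδ
  set K := LinearMap.ker δ with hKdef
  set S := Submodule.comap K.subtype (LinearMap.range ((-ι).prod ι')) with hSdef
  intro ψ
  set φ : K →ₗ[R] C := ψ.comp S.mkQ with hφdef
  have hmemB : ∀ b : B, ((ι b, (0 : X')) : X × X') ∈ K := by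
    intro b
    have hb : ι b ∈ LinearMap.ker π := hexact ▸ LinearMap.mem_range_self ι b
    simp [hKdef, hδ, LinearMap.mem_ker, LinearMap.mem_ker.mp hb]
  have hmemB' : ∀ b : B, (((0 : X), ι' b) : X × X') ∈ K := by
    intro b
    have hb : ι' b ∈ LinearMap.ker π' := hexact' ▸ LinearMap.mem_range_self ι' b
    simp [hKdef, hδ, LinearMap.mem_ker, LinearMap.mem_ker.mp hb]
  have hφS : ∀ k : K, k ∈ S → φ k = 0 := by
    intro k hk
    have : S.mkQ k = 0 := (Submodule.Quotient.mk_eq_zero S).mpr hk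
    simp [hφdef, LinearMap.comp_apply, this]
  -- φ agrees on the two copies of B
  have hagree : ∀ b : B, φ ⟨(0, ι' b), hmemB' b⟩ = φ ⟨(ι b, 0), hmemB b⟩ := by
    intro b
    have hmem : (⟨(0, ι' b), hmemB' b⟩ - ⟨(ι b, 0), hmemB b⟩ : K) ∈ S := by
      refine ⟨b, ?_⟩
      simp [Prod.ext_iff]
    have := hφS _ hmem
    rw [map_sub, sub_eq_zero] at this
    exact this
  -- the map B → K, b ↦ (ι b, 0)
  set lB : B →ₗ[R] K := LinearMap.codRestrict K (ι.prod 0) hmemB with hlB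
  set α : B →ₗ[R] C := φ.comp lB with hα
  obtain ⟨φ', hφ'⟩ := hX'.2 α
  set pr1 : K →ₗ[R] X := (LinearMap.fst R X X').comp K.subtype with hpr1
  set pr2 : K →ₗ[R] X' := (LinearMap.snd R X X').comp K.subtype with hpr2
  set θ : K →ₗ[R] C := φ - φ'.comp pr2 with hθ
  have hpr1surj : Function.Surjective pr1 := by
    intro x
    obtain ⟨x', hx'⟩ := hπ' (π x)
    exact ⟨⟨(x, x'), by simp [hKdef, hδ, LinearMap.mem_ker, hx']⟩, rfl⟩
  have hker : LinearMap.ker pr1 ≤ LinearMap.ker θ := by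
    rintro ⟨⟨x, x'⟩, hk⟩ hk1
    have hx0 : x = 0 := hk1
    subst hx0
    have hx'ker : x' ∈ LinearMap.ker π' := by
      have := LinearMap.mem_ker.mp hk
      simpa [hδ] using this
    obtain ⟨b, hb⟩ := hexact' ▸ hx'ker
    have hel : (⟨((0 : X), x'), hk⟩ : K) = ⟨(0, ι' b), hmemB' b⟩ := by
      apply Subtype.ext; simp [hb]
    rw [LinearMap.mem_ker, hθ, LinearMap.sub_apply, hel, hagree b]
    have h2 : (φ'.comp pr2) ⟨(0, ι' b), hmemB' b⟩ = φ' (ι' b) := rfl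
    have hαb : φ' (ι' b) = α b := by
      have := congrArg (fun f => f b) hφ'
      simpa using this
    have hαb' : α b = φ ⟨(ι b, 0), hmemB b⟩ := by
      simp [hα, hlB, LinearMap.comp_apply]
      congr 1
    rw [h2, hαb, hαb']
    exact sub_eq_zero.mpr rfl
  -- factor θ through pr1
  set e := pr1.quotKerEquivOfSurjective hpr1surj with he
  set g : X →ₗ[R] C :=
    ((LinearMap.ker pr1).liftQ θ hker).comp e.symm.toLinearMap with hg
  have hθ0 : θ = 0 := by
    ext k
    have h1 : e (Submodule.Quotient.mk k) = pr1 k := rfl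
    have h2 : e.symm (pr1 k) = Submodule.Quotient.mk k := by
      rw [← h1, LinearEquiv.symm_apply_apply]
    have : g (pr1 k) = θ k := by
      simp [hg, LinearMap.comp_apply, h2]
    rw [LinearMap.zero_apply, ← this, hX g, LinearMap.zero_apply]
  have hα0 : α = 0 := by
    ext b
    have := congrArg (fun f => f (lB b)) hθ0
    simp only [hθ, LinearMap.sub_apply, LinearMap.zero_apply, sub_eq_zero,
      LinearMap.comp_apply] at this
    have h2 : pr2 (lB b) = 0 := rfl
    have hαb : α b = φ (lB b) := rfl
    rw [hαb, this, h2, map_zero, LinearMap.zero_apply]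
  have hφ'0 : φ' = 0 := by
    apply hX'.1
    simp only [hφ', hα0]
    ext b
    simp
  have hφ0 : φ = 0 := by
    have := hθ0
    rw [hθ, hφ'0, sub_eq_zero] at this
    simp [this]
  exact Submodule.linearMap_qext S (by simpa [hφdef] using hφ0)
end

section
/- Let R be a ring, B an R-module, A and A' submodules of B, and σ a simple R-module. Assume: (a) the quotient B/A is isomorphic to a finite direct sum of copies of σ; (b) σ is not a subquotient of B/A' (i.e., there are no submodules Q ⊆ P ⊆ B/A' with P/Q isomorphic to σ). Then every submodule M of B with M ∩ A' ⊆ A satisfies M ⊆ A. -/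
/-- Proposition 2.9 (module-theoretic form): let `A, A'` be submodules of `B` and `σ`
a simple module. If `B/A` is isomorphic to a finite direct sum of copies of `σ` and
`σ` is not a subquotient of `B/A'`, then every submodule `M` of `B` with
`M ∩ A' ⊆ A` satisfies `M ⊆ A`. -/
theorem submodule_le_of_inter_le (R B σ : Type*) [Ring R]
    [AddCommGroup B] [Module R B] [AddCommGroup σ] [Module R σ] [IsSimpleModule R σ]
    (A A' : Submodule R B)
    (ha : ∃ n : ℕ, Nonempty ((B ⧸ A) ≃ₗ[R] (Fin n → σ)))
    (hb : ¬ ∃ (P Q : Submodule R (B ⧸ A')), Q ≤ P ∧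
      Nonempty ((↥P ⧸ Submodule.comap P.subtype Q) ≃ₗ[R] σ))
    (M : Submodule R B) (hM : M ⊓ A' ≤ A) : M ≤ A := by
  by_contra hM'
  rw [SetLike.not_le_iff_exists] at hM'
  obtain ⟨x, hxM, hxA⟩ := hM'
  obtain ⟨n, ⟨e⟩⟩ := ha
  -- the image of x in B ⧸ A is nonzero
  have hx0 : (Submodule.Quotient.mk x : B ⧸ A) ≠ 0 := by
    simpa [Submodule.Quotient.mk_eq_zero] using hxA
  have hex : e (Submodule.Quotient.mk x) ≠ 0 := by
    intro h
    apply hx0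
    apply e.injective
    simpa using h
  obtain ⟨i, hi⟩ := Function.ne_iff.mp hex
  -- a nonzero map f : M → σ killing M ⊓ A'
  set f : ↥M →ₗ[R] σ :=
    (LinearMap.proj i) ∘ₗ (e : (B ⧸ A) →ₗ[R] (Fin n → σ)) ∘ₗ A.mkQ ∘ₗ M.subtype with hf
  have hfx : f ⟨x, hxM⟩ ≠ 0 := by simpa [hf] using hi
  have hfsurj : Function.Surjective f := by
    have := eq_bot_or_eq_top (LinearMap.range f)
    rcases this with h | h
    · exfalso
      apply hfx
      have : f ⟨x, hxM⟩ ∈ LinearMap.range f := LinearMap.mem_range_self _ _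
      rw [h] at this
      simpa using this
    · exact LinearMap.range_eq_top.mp h
  set φ : ↥M →ₗ[R] (B ⧸ A') := A'.mkQ ∘ₗ M.subtype with hφ
  have hker : LinearMap.ker φ ≤ LinearMap.ker f := by
    intro y hy
    have hyA' : (y : B) ∈ A' := by
      simpa [hφ, Submodule.Quotient.mk_eq_zero] using hy
    have hyA : (y : B) ∈ A := hM ⟨y.2, hyA'⟩
    have hz : (Submodule.Quotient.mk (y : B) : B ⧸ A) = 0 :=
      (Submodule.Quotient.mk_eq_zero A).mpr hyA
    simp [hf, hz]
  set P : Submodule R (B ⧸ A') := LinearMap.range φ with hP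
  set Q : Submodule R (B ⧸ A') := Submodule.map φ (LinearMap.ker f) with hQ
  have hQP : Q ≤ P := LinearMap.map_le_range
  -- key: for z : M, φ z ∈ Q ↔ f z = 0
  have hkey : ∀ z : ↥M, φ z ∈ Q ↔ f z = 0 := by
    intro z
    constructor
    · rintro ⟨w, hw, hwz⟩
      have : z - w ∈ LinearMap.ker φ := by
        simp [LinearMap.mem_ker, map_sub, hwz]
      have hzw : z - w ∈ LinearMap.ker f := hker this
      have : f z - f w = 0 := by simpa [map_sub] using hzw
      have hw0 : f w = 0 := hw
      rw [hw0] at this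
      simpa using this
    · intro hz
      exact ⟨z, hz, rfl⟩
  set fbar : (↥M ⧸ LinearMap.ker φ) →ₗ[R] σ := (LinearMap.ker φ).liftQ f hker with hfbar
  set e1 := φ.quotKerEquivRange with he1
  set g : ↥P →ₗ[R] σ := fbar ∘ₗ (e1.symm : ↥P →ₗ[R] (↥M ⧸ LinearMap.ker φ)) with hg
  have hgsurj : Function.Surjective g := by
    intro s
    obtain ⟨z, hz⟩ := hfsurj s
    refine ⟨e1 (Submodule.Quotient.mk z), ?_⟩
    simp [hg, hfbar, Submodule.liftQ_apply, hz]
  have hkerg : LinearMap.ker g = Submodule.comap P.subtype Q := by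
    ext p
    obtain ⟨y, hy⟩ := e1.surjective p
    obtain ⟨z, rfl⟩ := Submodule.Quotient.mk_surjective _ y
    subst hy
    simp only [LinearMap.mem_ker, Submodule.mem_comap, Submodule.subtype_apply]
    have h1 : g (e1 (Submodule.Quotient.mk z)) = f z := by
      simp [hg, hfbar, Submodule.liftQ_apply]
    have h2 : ((e1 (Submodule.Quotient.mk z) : ↥P) : B ⧸ A') = φ z :=
      LinearMap.quotKerEquivRange_apply_mk φ z
    rw [h1, h2]
    exact (hkey z).symm
  have equiv : (↥P ⧸ Submodule.comap P.subtype Q) ≃ₗ[R] σ := by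
    rw [← hkerg]
    exact g.quotKerEquivOfSurjective hgsurj
  exact hb ⟨P, Q, hQP, ⟨equiv⟩⟩
end

section
/- Let R be a ring, N an R-module, σ a simple R-module, and A ⊆ B submodules of N with a further submodule A' ⊆ B. Assume: (a) the quotient B/A is isomorphic to a finite direct sum of copies of σ; (b) σ is not a subquotient of B/A' (i.e., there are no submodules Q ⊆ P ⊆ B/A' with P/Q isomorphic to σ); (c) every simple submodule of N/A is contained in B/A; (d) every nonzero submodule of N/A contains a simple submodule. Then every submodule M of N with M ∩ A' ⊆ A satisfies M ⊆ A. -/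
/-- Proposition 2.10 (module-theoretic form): let `A ≤ B` and `A' ≤ B` be submodules
of `N` and `σ` a simple module. Assume `B/A` is a finite direct sum of copies of `σ`,
`σ` is not a subquotient of `B/A'`, every simple submodule of `N/A` is contained in
`B/A`, and every nonzero submodule of `N/A` contains a simple submodule. Then every
submodule `M` of `N` with `M ∩ A' ⊆ A` satisfies `M ⊆ A`. -/
theorem submodule_le_of_inter_le' (R N σ : Type*) [Ring R]
    [AddCommGroup N] [Module R N] [AddCommGroup σ] [Module R σ] [IsSimpleModule R σ]
    (A B A' : Submodule R N) (hAB : A ≤ B) (hA'B : A' ≤ B)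
    (ha : ∃ n : ℕ, Nonempty (↥(Submodule.map A.mkQ B) ≃ₗ[R] (Fin n → σ)))
    (hb : ¬ ∃ (P Q : Submodule R (↥B ⧸ Submodule.comap B.subtype A')), Q ≤ P ∧
      Nonempty ((↥P ⧸ Submodule.comap P.subtype Q) ≃ₗ[R] σ))
    (hc : ∀ P : Submodule R (N ⧸ A), IsSimpleModule R ↥P → P ≤ Submodule.map A.mkQ B)
    (hd : ∀ P : Submodule R (N ⧸ A), P ≠ ⊥ →
      ∃ Q : Submodule R (N ⧸ A), Q ≤ P ∧ IsSimpleModule R ↥Q)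
    (M : Submodule R N) (hM : M ⊓ A' ≤ A) : M ≤ A := by
  by_contra hMA
  -- image of M in N/A is nonzero
  have hM0 : Submodule.map A.mkQ M ≠ ⊥ := by
    intro h
    apply hMA
    intro x hx
    have hmem : A.mkQ x ∈ Submodule.map A.mkQ M := ⟨x, hx, rfl⟩
    rw [h, Submodule.mem_bot] at hmem
    simpa [Submodule.Quotient.mk_eq_zero] using hmem
  obtain ⟨S, hSM, hSsimple⟩ := hd _ hM0
  haveI := hSsimple
  have hSB : S ≤ Submodule.map A.mkQ B := hc S hSsimple
  -- S ≃ σ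
  obtain ⟨n, ⟨e⟩⟩ := ha
  have eσ : Nonempty (↥S ≃ₗ[R] σ) := by
    set f : ↥S →ₗ[R] (Fin n → σ) := e.toLinearMap.comp (Submodule.inclusion hSB) with hf
    have hfinj : Function.Injective f := by
      apply e.injective.comp
      exact Submodule.inclusion_injective hSB
    haveI : Nontrivial ↥S := IsSimpleModule.nontrivial R ↥S
    obtain ⟨s, hs⟩ : ∃ s : ↥S, s ≠ 0 := exists_ne 0
    have hfs : f s ≠ 0 := fun h => hs (hfinj (by simpa using h))
    obtain ⟨i, hi⟩ : ∃ i, f s i ≠ 0 := by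
      by_contra h
      push_neg at h
      exact hfs (funext h)
    set g : ↥S →ₗ[R] σ := (LinearMap.proj i).comp f with hg
    have hg0 : g ≠ 0 := by
      intro h
      apply hi
      have := congrFun (congrArg (fun k => k.toFun) h) s
      simpa [hg] using this
    rcases g.bijective_or_eq_zero with hbij | h0
    · exact ⟨LinearEquiv.ofBijective g hbij⟩
    · exact absurd h0 hg0
  obtain ⟨eσ⟩ := eσ
  -- pull back S
  set P' : Submodule R N := M ⊓ Submodule.comap A.mkQ S with hP'
  have hP'B : P' ≤ B := by
    intro x hx
    have hxS : A.mkQ x ∈ S := hx.2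
    obtain ⟨b, hbB, hb'⟩ := hSB hxS
    have hbx : b - x ∈ A := by
      rwa [Submodule.mkQ_apply, Submodule.mkQ_apply, Submodule.Quotient.eq] at hb'
    have : b - (b - x) ∈ B := B.sub_mem hbB (hAB hbx)
    simpa using this
  -- the map ψ : P' → S
  have hψmem : ∀ c : ↥P', A.mkQ (P'.subtype c) ∈ S := fun c => c.2.2
  set ψ : ↥P' →ₗ[R] ↥S := LinearMap.codRestrict S (A.mkQ.comp P'.subtype) hψmem with hψ
  have hψsurj : Function.Surjective ψ := by
    rintro ⟨s, hsS⟩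
    obtain ⟨m, hmM, hm⟩ := hSM hsS
    refine ⟨⟨m, hmM, by simpa [Submodule.mem_comap, hm]⟩, ?_⟩
    apply Subtype.ext
    simpa [hψ] using hm
  have hψker : LinearMap.ker ψ = Submodule.comap P'.subtype A := by
    ext x
    simp [hψ, LinearMap.mem_ker, Subtype.ext_iff, Submodule.Quotient.mk_eq_zero,
      Submodule.mkQ_apply]
  have e1 : (↥P' ⧸ Submodule.comap P'.subtype A) ≃ₗ[R] ↥S :=
    (Submodule.quotEquivOfEq _ _ hψker.symm).trans (ψ.quotKerEquivOfSurjective hψsurj)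
  -- the map into B/A'
  set π : ↥B →ₗ[R] (↥B ⧸ Submodule.comap B.subtype A') :=
    (Submodule.comap B.subtype A').mkQ with hπ
  set φ' : ↥P' →ₗ[R] (↥B ⧸ Submodule.comap B.subtype A') :=
    π.comp (Submodule.inclusion hP'B) with hφ'
  set P : Submodule R (↥B ⧸ Submodule.comap B.subtype A') := LinearMap.range φ' with hP
  set Q : Submodule R (↥B ⧸ Submodule.comap B.subtype A') :=
    Submodule.map φ' (Submodule.comap P'.subtype A) with hQ
  have hQP : Q ≤ P := LinearMap.map_le_range
  set φ'' : ↥P' →ₗ[R] ↥P := φ'.rangeRestrict with hφ''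
  set φ : ↥P' →ₗ[R] (↥P ⧸ Submodule.comap P.subtype Q) :=
    (Submodule.comap P.subtype Q).mkQ.comp φ'' with hφ
  have hφsurj : Function.Surjective φ :=
    (Submodule.mkQ_surjective _).comp φ'.surjective_rangeRestrict
  have hφker : LinearMap.ker φ = Submodule.comap P'.subtype A := by
    ext x
    constructor
    · intro hx
      have hx' : φ' x ∈ Q := by
        have : φ'' x ∈ Submodule.comap P.subtype Q := by
          simpa [hφ, LinearMap.mem_ker, Submodule.Quotient.mk_eq_zero] using hx
        exact this
      obtain ⟨y, hyA, hy⟩ := hx'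
      -- φ' y = φ' x means x - y ∈ A' as elements of N
      have hxy : ((x : N) - (y : N)) ∈ A' := by
        have h2 : π (Submodule.inclusion hP'B y) = π (Submodule.inclusion hP'B x) := hy
        rw [hπ, Submodule.mkQ_apply, Submodule.mkQ_apply, Submodule.Quotient.eq] at h2
        have := h2
        -- this : inclusion y - inclusion x ∈ comap B.subtype A'
        have h3 : ((y : N) - (x : N)) ∈ A' := this
        simpa using A'.neg_mem h3
      have hxyM : (x : N) - (y : N) ∈ M := M.sub_mem x.2.1 y.2.1
      have : (x : N) - (y : N) ∈ A := hM ⟨hxyM, hxy⟩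
      have : (x : N) ∈ A := by
        have := A.add_mem this hyA
        simpa using this
      exact this
    · intro hx
      have : φ' x ∈ Q := ⟨x, hx, rfl⟩
      have : φ'' x ∈ Submodule.comap P.subtype Q := by exact this
      simpa [hφ, LinearMap.mem_ker, Submodule.Quotient.mk_eq_zero] using this
  have e2 : (↥P' ⧸ Submodule.comap P'.subtype A) ≃ₗ[R]
      (↥P ⧸ Submodule.comap P.subtype Q) :=
    (Submodule.quotEquivOfEq _ _ hφker.symm).trans (φ.quotKerEquivOfSurjective hφsurj)
  exact hb ⟨P, Q, hQP, ⟨(e2.symm.trans e1).trans eσ⟩⟩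
end
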